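/- Let G be a finite simple undirected graph in which every vertex has positive degree, let Q be its simple random walk matrix (Q_{u,v} = 1/deg(u) if u ∼ v, else 0), and let 0 < ε < 1. Then for every vertex v, the expected total number of visits to v by ε-terminated random walks started once from each node satisfies Σ_{t=0}^∞ (1−ε)^t · Σ_u (Q^t)_{u,v} ≤ 1 + deg(v)·(1−ε)/ε. In particular the expected number of visits to v is O(deg(v)/ε). -/

import Mathlib

/-- The expected total number of visits to a vertex `v` by ε-terminated random walks
started once from each node of a finite simple undirected graph satisfies
`Σ_{t=0}^∞ (1−ε)^t · Σ_u (Q^t)_{u,v} ≤ 1 + deg(v)·(1−ε)/ε`;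
in particular it is `O(deg(v)/ε)`. -/
theorem expected_visits_bound
    (V : Type*) [Fintype V] [DecidableEq V] (G : SimpleGraph V) [DecidableRel G.Adj]
    (hdeg : ∀ v, 0 < G.degree v)
    (Q : Matrix V V ℝ)
    (hQ : ∀ u v, Q u v = if G.Adj u v then ((G.degree u : ℝ))⁻¹ else 0)
    (ε : ℝ) (hε0 : 0 < ε) (hε1 : ε < 1) :
    ∀ v, ∑' t : ℕ, (1 - ε) ^ t * ∑ u, (Q ^ t) u v ≤
      1 + (G.degree v : ℝ) * (1 - ε) / ε := by
  intro v
  have hr0 : (0:ℝ) ≤ 1 - ε := by linarith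
  have hr1 : 1 - ε < 1 := by linarith
  have hdvz : ∀ u : V, ((G.degree u : ℝ)) ≠ 0 := fun u => by
    exact_mod_cast (hdeg u).ne'
  have hdv1 : ∀ u : V, (1:ℝ) ≤ (G.degree u : ℝ) := fun u => by
    exact_mod_cast hdeg u
  -- nonnegativity of Q entries
  have hQ0 : ∀ u w, 0 ≤ Q u w := by
    intro u w; rw [hQ]
    split
    · positivity
    · exact le_refl 0
  -- row sums of Q are 1
  have hrow : ∀ u, ∑ w, Q u w = 1 := by
    intro u
    simp only [hQ]
    rw [Finset.sum_ite, Finset.sum_const_zero, add_zero, Finset.sum_const]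
    have : (Finset.univ.filter (fun w => G.Adj u w)) = G.neighborFinset u := by
      ext w; simp [SimpleGraph.mem_neighborFinset]
    rw [this, ← SimpleGraph.card_neighborFinset_eq_degree] at *
    rw [nsmul_eq_mul]
    exact mul_inv_cancel₀ (by exact_mod_cast (hdeg u).ne')
  -- detailed balance for Q
  have hbal1 : ∀ u w, (G.degree u : ℝ) * Q u w = (G.degree w : ℝ) * Q w u := by
    intro u w
    rw [hQ, hQ]
    by_cases h : G.Adj u w
    · rw [if_pos h, if_pos h.symm, mul_inv_cancel₀ (hdvz u), mul_inv_cancel₀ (hdvz w)]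
    · rw [if_neg h, if_neg (fun h' => h h'.symm), mul_zero, mul_zero]
  -- nonnegativity of Q^t entries
  have hpow0 : ∀ t u w, 0 ≤ (Q ^ t) u w := by
    intro t
    induction t with
    | zero => intro u w; simp [Matrix.one_apply]; positivity
    | succ t ih =>
      intro u w
      rw [pow_succ, Matrix.mul_apply]
      exact Finset.sum_nonneg fun x _ => mul_nonneg (ih u x) (hQ0 x w)
  -- row sums of Q^t are 1
  have hrowt : ∀ t u, ∑ w, (Q ^ t) u w = 1 := by
    intro t
    induction t with
    | zero => intro u; simp [Matrix.one_apply]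
    | succ t ih =>
      intro u
      simp only [pow_succ, Matrix.mul_apply]
      rw [Finset.sum_comm]
      calc ∑ x, ∑ w, (Q ^ t) u x * Q x w
          = ∑ x, (Q ^ t) u x * ∑ w, Q x w := by
            simp [Finset.mul_sum]
        _ = 1 := by simp [hrow, ih]
  -- detailed balance for Q^t
  have hbalt : ∀ t u w, (G.degree u : ℝ) * (Q ^ t) u w = (G.degree w : ℝ) * (Q ^ t) w u := by
    intro t
    induction t with
    | zero =>
      intro u w
      by_cases h : u = w
      · subst h; rfl
      · simp [Matrix.one_apply, h, Ne.symm h]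
    | succ t ih =>
      intro u w
      conv_lhs => rw [pow_succ']
      conv_rhs => rw [pow_succ]
      rw [Matrix.mul_apply, Matrix.mul_apply, Finset.mul_sum, Finset.mul_sum]
      apply Finset.sum_congr rfl
      intro x _
      calc (G.degree u : ℝ) * (Q u x * (Q ^ t) x w)
          = ((G.degree u : ℝ) * Q u x) * (Q ^ t) x w := by ring
        _ = ((G.degree x : ℝ) * Q x u) * (Q ^ t) x w := by rw [hbal1]
        _ = ((G.degree x : ℝ) * (Q ^ t) x w) * Q x u := by ring
        _ = ((G.degree w : ℝ) * (Q ^ t) w x) * Q x u := by rw [ih]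
        _ = (G.degree w : ℝ) * ((Q ^ t) w x * Q x u) := by ring
  -- column sum bound
  have hcol : ∀ t, ∑ u, (Q ^ t) u v ≤ (G.degree v : ℝ) := by
    intro t
    calc ∑ u, (Q ^ t) u v ≤ ∑ u, (G.degree v : ℝ) * (Q ^ t) v u := by
          apply Finset.sum_le_sum
          intro u _
          have h := hbalt t u v
          have h1 : (Q ^ t) u v = (G.degree v : ℝ) * (Q ^ t) v u / (G.degree u : ℝ) := by
            rw [eq_div_iff (hdvz u), mul_comm]
            exact h
          rw [h1]
          rw [div_le_iff₀ (by exact_mod_cast hdeg u)]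
          have hnn : 0 ≤ (G.degree v : ℝ) * (Q ^ t) v u :=
            mul_nonneg (by positivity) (hpow0 t v u)
          nlinarith [mul_le_mul_of_nonneg_left (hdv1 u) hnn]
      _ = (G.degree v : ℝ) := by rw [← Finset.mul_sum, hrowt t v, mul_one]
  set f : ℕ → ℝ := fun t => (1 - ε) ^ t * ∑ u, (Q ^ t) u v with hf
  have hfnn : ∀ t, 0 ≤ f t := fun t =>
    mul_nonneg (pow_nonneg hr0 t) (Finset.sum_nonneg fun u _ => hpow0 t u v)
  have hfle : ∀ t, f t ≤ (G.degree v : ℝ) * (1 - ε) ^ t := by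
    intro t
    rw [hf]
    calc (1 - ε) ^ t * ∑ u, (Q ^ t) u v ≤ (1 - ε) ^ t * (G.degree v : ℝ) :=
          mul_le_mul_of_nonneg_left (hcol t) (pow_nonneg hr0 t)
      _ = (G.degree v : ℝ) * (1 - ε) ^ t := by ring
  have hgsum : Summable (fun t : ℕ => (G.degree v : ℝ) * (1 - ε) ^ t) :=
    (summable_geometric_of_lt_one hr0 hr1).mul_left _
  have hfsum : Summable f := Summable.of_nonneg_of_le hfnn hfle hgsum
  have hf0 : f 0 = 1 := by simp [hf, Matrix.one_apply]
  rw [Summable.tsum_eq_zero_add hfsum, hf0]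
  have : ∑' t : ℕ, f (t + 1) ≤ (G.degree v : ℝ) * (1 - ε) / ε := by
    have hsucc : Summable (fun t : ℕ => (G.degree v : ℝ) * (1 - ε) ^ (t + 1)) := by
      have h := (summable_geometric_of_lt_one hr0 hr1).mul_left
        ((G.degree v : ℝ) * (1 - ε))
      exact h.congr fun t => by ring
    have hfssum : Summable (fun t : ℕ => f (t + 1)) :=
      Summable.of_nonneg_of_le (fun t => hfnn (t + 1)) (fun t => hfle (t + 1)) hsucc
    calc ∑' t : ℕ, f (t + 1) ≤ ∑' t : ℕ, (G.degree v : ℝ) * (1 - ε) ^ (t + 1) :=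
          Summable.tsum_le_tsum (fun t => hfle (t + 1)) hfssum hsucc
      _ = ∑' t : ℕ, (G.degree v : ℝ) * (1 - ε) * (1 - ε) ^ t := by
          apply tsum_congr; intro t; ring
      _ = (G.degree v : ℝ) * (1 - ε) / ε := by
          rw [tsum_mul_left, tsum_geometric_of_lt_one hr0 hr1]
          field_simp
          rw [sub_sub_cancel, mul_right_comm, mul_div_assoc, div_self hε0.ne', mul_one]
  linarith
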